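/- For every integer N ≥ 1, the polynomial ℓ_N(z) = ((1+z)^{N+1} - (1-z)^{N+1})/(2z) + (1+z)^N is a Hurwitz stable polynomial of degree N. -/

import Mathlib

open Polynomial

theorem ellN_hurwitz (N : ℕ) (hN : 1 ≤ N) :
    (C (2⁻¹ : ℂ) * (((1 + X) ^ (N + 1) - (1 - X) ^ (N + 1)) /ₘ X)
        + (1 + X) ^ N).natDegree = N ∧
    ∀ z : ℂ, (C (2⁻¹ : ℂ) * (((1 + X) ^ (N + 1) - (1 - X) ^ (N + 1)) /ₘ X)
        + (1 + X) ^ N).IsRoot z → z.re < 0 := by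
  set Q : ℂ[X] := (1 + X) ^ (N + 1) - (1 - X) ^ (N + 1) with hQ
  set L : ℂ[X] := C (2⁻¹ : ℂ) * (Q /ₘ X) + (1 + X) ^ N with hL
  have hXD : X * (Q /ₘ X) = Q := by
    have h0 : Q %ₘ X = 0 := by
      rw [Polynomial.modByMonic_X]
      simp [hQ]
    have h := Polynomial.modByMonic_add_div Q X
    rw [h0, zero_add] at h
    exact h
  set R : ℂ[X] := (1 + X) ^ N * (3 * X + 1) - (1 - X) ^ (N + 1) with hRdef
  have hR : (C (2:ℂ)) * (X * L) = R := by
    have h2 : (C (2:ℂ)) * (X * L) =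
        C 2 * C 2⁻¹ * (X * (Q /ₘ X)) + C 2 * (X * (1 + X) ^ N) := by
      rw [hL]; ring
    rw [h2, hXD, hQ, hRdef]
    have hc : (C (2:ℂ)) * C 2⁻¹ = 1 := by rw [← C_mul]; norm_num
    rw [hc]
    have hC2 : (C (2:ℂ)) = 2 := map_ofNat C 2
    rw [hC2, pow_succ, pow_succ]
    ring
  -- degree facts
  have h1X : ((1 + X : ℂ[X])).natDegree = 1 := by
    rw [add_comm]; exact natDegree_X_add_C 1
  have h1Xm : ((1 + X : ℂ[X])).Monic := by
    rw [add_comm]; exact monic_X_add_C 1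
  have h3X : ((3 * X + 1 : ℂ[X])).natDegree = 1 := by compute_degree!
  have h3Xl : ((3 * X + 1 : ℂ[X])).leadingCoeff = 3 := by
    rw [leadingCoeff, h3X]; simp [coeff_one]
  have h1mX : ((1 - X : ℂ[X])).natDegree = 1 := by compute_degree!
  have h1mXl : ((1 - X : ℂ[X])).leadingCoeff = -1 := by
    rw [leadingCoeff, h1mX]; simp [coeff_one]
  have hAd : (((1 + X) ^ N * (3 * X + 1) : ℂ[X])).natDegree = N + 1 := by
    rw [natDegree_mul (pow_ne_zero _ h1Xm.ne_zero)
      (by intro h; simpa using congrArg (eval 0) h),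
      natDegree_pow, h1X, h3X]; omega
  have hAl : (((1 + X) ^ N * (3 * X + 1) : ℂ[X])).leadingCoeff = 3 := by
    rw [leadingCoeff_mul, leadingCoeff_pow, h1Xm.leadingCoeff, h3Xl]; simp
  have hBd : (((1 - X) ^ (N + 1) : ℂ[X])).natDegree = N + 1 := by
    rw [natDegree_pow, h1mX]; omega
  have hBl : (((1 - X) ^ (N + 1) : ℂ[X])).leadingCoeff = (-1) ^ (N + 1) := by
    rw [leadingCoeff_pow, h1mXl]
  have hdR : R.natDegree = N + 1 := by
    rw [hRdef]
    have hco : (((1 + X) ^ N * (3 * X + 1) - (1 - X) ^ (N + 1) : ℂ[X])).coeff (N + 1) ≠ 0 := by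
      have key : ∀ (p : ℂ[X]) (d : ℕ), p.natDegree = d → p.coeff d = p.leadingCoeff := by
        rintro p d rfl; rfl
      rw [coeff_sub, key _ _ hAd, key _ _ hBd, hAl, hBl]
      rcases Nat.even_or_odd (N + 1) with h | h
      · rw [h.neg_one_pow]; norm_num
      · rw [h.neg_one_pow]; norm_num
    refine le_antisymm ?_ (le_natDegree_of_ne_zero hco)
    refine (natDegree_sub_le _ _).trans ?_
    rw [hAd, hBd]; omega
  have hRne : R ≠ 0 := by
    intro h
    rw [h] at hdR
    simp at hdR
  have hLne : L ≠ 0 := by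
    intro h
    rw [h] at hR
    simp at hR
    exact hRne hR.symm
  have hdeg : L.natDegree = N := by
    have h1 : (C (2:ℂ) * (X * L)).natDegree = N + 1 := by rw [hR, hdR]
    rw [natDegree_mul (by simp : (C (2:ℂ)) ≠ 0) (mul_ne_zero X_ne_zero hLne),
      natDegree_mul (X_ne_zero) hLne, natDegree_C, natDegree_X] at h1
    omega
  refine ⟨hdeg, ?_⟩
  intro z hz
  by_contra hre
  push_neg at hre
  have hz0 : z ≠ 0 := by
    intro h
    subst h
    have hDe : (Q /ₘ X).eval 0 = (derivative Q).eval 0 := by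
      have h := congrArg derivative hXD
      rw [derivative_mul, derivative_X] at h
      have h2 := congrArg (eval 0) h
      simpa using h2
    have hdQ : (derivative Q).eval 0 = 2 * (N + 1 : ℂ) := by
      rw [hQ]
      simp [derivative_pow]
      ring
    have hLe : L.eval 0 = (N : ℂ) + 2 := by
      rw [hL]
      simp [hDe, hdQ]
      ring
    rw [IsRoot, hLe] at hz
    have : (N : ℂ) + 2 ≠ 0 := by
      intro h
      have := congrArg Complex.re h
      simp at this
      have : (0:ℝ) ≤ (N:ℝ) := Nat.cast_nonneg N
      linarith
    exact this hz
  have hRz : (1 + z) ^ N * (3 * z + 1) = (1 - z) ^ (N + 1) := by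
    have h := congrArg (eval z) hR
    rw [IsRoot] at hz
    simp [hRdef, hz] at h
    linear_combination -h
  have h1z : ‖1 - z‖ ≤ ‖1 + z‖ := by
    rw [Complex.norm_def, Complex.norm_def]
    apply Real.sqrt_le_sqrt
    simp [Complex.normSq_apply, Complex.add_re, Complex.add_im, Complex.sub_re, Complex.sub_im]
    nlinarith [hre]
  have h2z : ‖1 - z‖ < ‖3 * z + 1‖ := by
    rw [Complex.norm_def, Complex.norm_def]
    apply Real.sqrt_lt_sqrt (Complex.normSq_nonneg _)
    have hns : 0 < Complex.normSq z := Complex.normSq_pos.mpr hz0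
    simp [Complex.normSq_apply, Complex.add_re, Complex.add_im, Complex.sub_re, Complex.sub_im,
      Complex.mul_re, Complex.mul_im] at *
    nlinarith [hre, hns]
  have hpos : 0 < ‖1 + z‖ := by
    refine norm_pos_iff.mpr ?_
    intro h
    have := congrArg Complex.re h
    simp at this
    linarith
  have habs := congrArg (‖·‖) hRz
  rw [norm_mul, norm_pow, norm_pow] at habs
  have hlt : ‖1 - z‖ ^ (N + 1)
      < ‖1 + z‖ ^ N * ‖3 * z + 1‖ := by
    calc ‖1 - z‖ ^ (N + 1)
        = ‖1 - z‖ ^ N * ‖1 - z‖ := by ring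
      _ < ‖1 + z‖ ^ N * ‖3 * z + 1‖ := by
          apply mul_lt_mul' (pow_le_pow_left₀ (norm_nonneg _) h1z N) h2z
            (norm_nonneg _) (pow_pos hpos N)
  rw [habs] at hlt
  exact lt_irrefl _ hlt
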